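/- Let Π be a ground logic program over atoms A with rules indexed by a finite type R, and let T(Π) be its transformed program over A ⊎ R. The map sending M ⊆ A to M' = M ∪ { dm_r : r ∈ R, the body of rule r is false in M } is a bijection from the set of supported models of Π onto the set of stable models of T(Π), with inverse given by M' ↦ M' ∩ A. -/

import Mathlib

/-- A ground rule: head ← body⁺, not body⁻. -/
structure Rule (A : Type*) where
  head : A
  bodyPos : Finset A
  bodyNeg : Finset A
deriving DecidableEq

/-- The body of rule `r` is true in interpretation `M`:
`body⁺(r) ⊆ M` and `body⁻(r) ∩ M = ∅`. -/
def BodyTrue {A : Type*} (M : Set A) (r : Rule A) : Prop :=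
  ↑r.bodyPos ⊆ M ∧ ∀ a ∈ r.bodyNeg, a ∉ M

/-- `M` is a model of the program `P` (a family of rules indexed by `R`). -/
def IsModel {A R : Type*} (P : R → Rule A) (M : Set A) : Prop :=
  ∀ r, BodyTrue M (P r) → (P r).head ∈ M

/-- `M` is a supported model of `P`: a model in which every true atom
is the head of some rule of `P` whose body is true in `M`. -/
def IsSupported {A R : Type*} (P : R → Rule A) (M : Set A) : Prop :=
  IsModel P M ∧ ∀ a ∈ M, ∃ r, (P r).head = a ∧ ↑(P r).bodyPos ⊆ M ∧
    ∀ b ∈ (P r).bodyNeg, b ∉ M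

/-- `N` is a model of the Gelfond–Lifschitz reduct `P^M`: for every rule of `P`
surviving the reduct (i.e. with `body⁻(r) ∩ M = ∅`), whose negative literals are
removed, if its positive body holds in `N` then so does its head. -/
def ReductModel {A R : Type*} (P : R → Rule A) (M N : Set A) : Prop :=
  ∀ r, (∀ a ∈ (P r).bodyNeg, a ∉ M) → ↑(P r).bodyPos ⊆ N → (P r).head ∈ N

/-- `M` is a stable model of `P`: `M` is the least model of the reduct `P^M`. -/
def IsStable {A R : Type*} (P : R → Rule A) (M : Set A) : Prop :=
  ReductModel P M M ∧ ∀ N, ReductModel P M N → M ⊆ N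

/-- Index type for the rules of the transformed program `T(P)`: one rule
`head(r) ← not dm_r` per rule `r`, one rule `dm_r ← not l` per `l ∈ body⁺(r)`,
and one rule `dm_r ← l` per `l ∈ body⁻(r)`. -/
abbrev TransIdx {A R : Type*} (P : R → Rule A) : Type _ :=
  R ⊕ ((Σ r : R, {l // l ∈ (P r).bodyPos}) ⊕ (Σ r : R, {l // l ∈ (P r).bodyNeg}))

/-- The transformed program `T(P)` over atoms `A ⊕ R`, where `Sum.inr r`
plays the role of the fresh auxiliary atom `dm_r`. -/
def Transform {A R : Type*} (P : R → Rule A) : TransIdx P → Rule (A ⊕ R)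
  | Sum.inl r => ⟨Sum.inl (P r).head, ∅, {Sum.inr r}⟩
  | Sum.inr (Sum.inl ⟨r, l⟩) => ⟨Sum.inr r, ∅, {Sum.inl l.1}⟩
  | Sum.inr (Sum.inr ⟨r, l⟩) => ⟨Sum.inr r, {Sum.inl l.1}, ∅⟩

/-- `Lift P M = M ∪ { dm_r | the body of rule r is false in M }`,
viewing `M ⊆ A` as a subset of `A ⊕ R` via the left injection. -/
def Lift {A R : Type*} (P : R → Rule A) (M : Set A) : Set (A ⊕ R) :=
  Sum.inl '' M ∪ Sum.inr '' {r | ¬ BodyTrue M (P r)}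

section Aux

variable {A R : Type*} (P : R → Rule A)

lemma mem_lift_inl {M : Set A} {a : A} : Sum.inl a ∈ Lift P M ↔ a ∈ M := by
  simp [Lift]

lemma mem_lift_inr {M : Set A} {r : R} :
    (Sum.inr r : A ⊕ R) ∈ Lift P M ↔ ¬ BodyTrue M (P r) := by
  simp [Lift]

/-- Minimality trick: if every rule with head `x` has a false reduct-condition,
then `x` is not in the stable model. -/
lemma stable_not_mem {A' R' : Type*} {Q : R' → Rule A'} {M' : Set A'}
    (hM : IsStable Q M') (x : A')
    (h : ∀ r, (Q r).head = x → (∀ a ∈ (Q r).bodyNeg, a ∉ M') →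
      ¬ (↑(Q r).bodyPos ⊆ M' \ {x})) :
    x ∉ M' := by
  intro hx
  have hred : ReductModel Q M' (M' \ {x}) := by
    intro r hneg hpos
    have hpos' : ↑(Q r).bodyPos ⊆ M' := hpos.trans Set.diff_subset
    have hhead := hM.1 r hneg hpos'
    refine ⟨hhead, ?_⟩
    simp only [Set.mem_singleton_iff]
    exact fun he => h r he hneg hpos
  exact ((hM.2 _ hred) hx).2 rfl

lemma lift_stable {M : Set A} (h : IsSupported P M) :
    IsStable (Transform P) (Lift P M) := by
  constructor
  · rintro (r | ⟨r, l, hl⟩ | ⟨r, l, hl⟩) hneg hpos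
    · simp only [Transform, Finset.mem_singleton, forall_eq] at hneg
      rw [mem_lift_inr, not_not] at hneg
      exact (mem_lift_inl P).2 (h.1 r hneg)
    · simp only [Transform, Finset.mem_singleton, forall_eq] at hneg
      rw [mem_lift_inl] at hneg
      exact (mem_lift_inr P).2 fun hb => hneg (hb.1 hl)
    · simp only [Transform, Finset.coe_singleton, Set.singleton_subset_iff] at hpos
      rw [mem_lift_inl] at hpos
      exact (mem_lift_inr P).2 fun hb => hb.2 l hl hpos
  · intro N hN
    have hinl : ∀ a ∈ M, (Sum.inl a : A ⊕ R) ∈ N := by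
      intro a ha
      obtain ⟨r, hhead, hpos, hneg⟩ := h.2 a ha
      have := hN (Sum.inl r) ?_ ?_
      · simpa [Transform, hhead] using this
      · simp only [Transform, Finset.mem_singleton, forall_eq]
        rw [mem_lift_inr, not_not]
        exact ⟨hpos, hneg⟩
      · simp [Transform]
    rintro x hx
    rcases x with a | r
    · exact hinl a ((mem_lift_inl P).1 hx)
    · have hb : ¬ BodyTrue M (P r) := (mem_lift_inr P).1 hx
      rw [BodyTrue, not_and_or] at hb
      rcases hb with hb | hb
      · rw [Set.not_subset] at hb
        obtain ⟨l, hl, hlM⟩ := hb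
        have := hN (Sum.inr (Sum.inl ⟨r, ⟨l, hl⟩⟩)) ?_ ?_
        · simpa [Transform] using this
        · simp only [Transform, Finset.mem_singleton, forall_eq]
          rw [mem_lift_inl]; exact hlM
        · simp [Transform]
      · push_neg at hb
        obtain ⟨l, hl, hlM⟩ := hb
        have := hN (Sum.inr (Sum.inr ⟨r, ⟨l, hl⟩⟩)) ?_ ?_
        · simpa [Transform] using this
        · simp [Transform]
        · simp only [Transform, Finset.coe_singleton, Set.singleton_subset_iff]
          exact hinl l hlM

lemma stable_inr_iff {M' : Set (A ⊕ R)} (hM : IsStable (Transform P) M') (r : R) :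
    (Sum.inr r : A ⊕ R) ∈ M' ↔ ¬ BodyTrue (Sum.inl ⁻¹' M') (P r) := by
  constructor
  · intro hr hb
    refine stable_not_mem hM (Sum.inr r) ?_ hr
    rintro (r' | ⟨r', l, hl⟩ | ⟨r', l, hl⟩) hhead hneg hpos
    · exact Sum.inl_ne_inr hhead
    · simp only [Transform] at hhead hneg
      obtain rfl : r' = r := Sum.inr.inj hhead
      simp only [Finset.mem_singleton, forall_eq] at hneg
      exact hneg (hb.1 hl)
    · simp only [Transform] at hhead hpos
      obtain rfl : r' = r := Sum.inr.inj hhead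
      simp only [Finset.coe_singleton, Set.singleton_subset_iff, Set.mem_diff] at hpos
      exact hb.2 l hl hpos.1
  · intro hb
    rw [BodyTrue, not_and_or] at hb
    rcases hb with hb | hb
    · rw [Set.not_subset] at hb
      obtain ⟨l, hl, hlM⟩ := hb
      have := hM.1 (Sum.inr (Sum.inl ⟨r, ⟨l, hl⟩⟩)) ?_ ?_
      · simpa [Transform] using this
      · simpa [Transform] using hlM
      · simp [Transform]
    · push_neg at hb
      obtain ⟨l, hl, hlM⟩ := hb
      have := hM.1 (Sum.inr (Sum.inr ⟨r, ⟨l, hl⟩⟩)) ?_ ?_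
      · simpa [Transform] using this
      · simp [Transform]
      · simpa [Transform] using hlM

lemma stable_supported {M' : Set (A ⊕ R)} (hM : IsStable (Transform P) M') :
    IsSupported P (Sum.inl ⁻¹' M') := by
  constructor
  · intro r hb
    have := hM.1 (Sum.inl r) ?_ ?_
    · simpa [Transform] using this
    · simp only [Transform, Finset.mem_singleton, forall_eq]
      rw [stable_inr_iff P hM, not_not]
      exact hb
    · simp [Transform]
  · intro a ha
    by_contra hcon
    push_neg at hcon
    refine stable_not_mem hM (Sum.inl a) ?_ ha
    rintro (r | ⟨r, l, hl⟩ | ⟨r, l, hl⟩) hhead hneg hpos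
    · simp only [Transform] at hhead hneg
      obtain hha : (P r).head = a := Sum.inl.inj hhead
      simp only [Finset.mem_singleton, forall_eq] at hneg
      rw [stable_inr_iff P hM, not_not] at hneg
      obtain ⟨b, hb, hbM⟩ := hcon r hha hneg.1
      exact hneg.2 b hb hbM
    · exact Sum.inr_ne_inl hhead
    · exact Sum.inr_ne_inl hhead

lemma lift_preimage_eq {M' : Set (A ⊕ R)} (hM : IsStable (Transform P) M') :
    Lift P (Sum.inl ⁻¹' M') = M' := by
  ext x
  rcases x with a | r
  · rw [mem_lift_inl]; rfl
  · rw [mem_lift_inr, ← stable_inr_iff P hM]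

lemma preimage_lift_eq (M : Set A) : Sum.inl ⁻¹' Lift P M = M := by
  ext a
  simp [Lift]

end Aux

/-- The map `M ↦ M ∪ { dm_r | body of r is false in M }` is a bijection from
the supported models of `P` onto the stable models of `T(P)`, with inverse
`M' ↦ M' ∩ A`. -/
theorem lift_bijection_supported_stable
    {A R : Type*} [Fintype R] (P : R → Rule A) :
    Set.BijOn (Lift P) {M | IsSupported P M} {M' | IsStable (Transform P) M'} ∧
      Set.InvOn (fun M' : Set (A ⊕ R) => Sum.inl ⁻¹' M') (Lift P)
        {M | IsSupported P M} {M' | IsStable (Transform P) M'} := by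
  have hinv : Set.InvOn (fun M' : Set (A ⊕ R) => Sum.inl ⁻¹' M') (Lift P)
      {M | IsSupported P M} {M' | IsStable (Transform P) M'} :=
    ⟨fun M _ => preimage_lift_eq P M, fun M' hM' => lift_preimage_eq P hM'⟩
  exact ⟨hinv.bijOn (fun M hM => lift_stable P hM) (fun M' hM' => stable_supported P hM'),
    hinv⟩
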